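/- Hedge-ratio approximation: with a(k,x) := (f(k+1, u·x) - f(k+1, d·x))/((u-d)·x) (the binomial delta), if g ∈ C² with M := sup|g''| < ∞, then |a(k,x) - ∂_x f(k+1, x)| ≤ M·ξ̄·Q^{N-k-1}, where ξ̄ := max(|u-1|,|1-d|)·x bounds |ξ - x| for the mean-value point ξ ∈ (dx, ux), and Q := q·u²/R + (1-q)·d²/R, with q = (R-d)/(u-d). -/

import Mathlib

open Finset

lemma stmt16_slope (g : ℝ → ℝ) (M : ℝ) (hM0 : 0 ≤ M)
    (hgd : Differentiable ℝ g)
    (hLip : ∀ s t : ℝ, |deriv g s - deriv g t| ≤ M * |s - t|)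
    (u d x a : ℝ) (hx : 0 < x) (ha : 0 < a) (hd : 0 < d) (hdu : d < u) :
    |(g (u * x * a) - g (d * x * a)) / ((u - d) * x) - deriv g (x * a) * a|
      ≤ M * (max |u - 1| |1 - d| * x) * a ^ 2 := by
  have hxa : 0 < x * a := by positivity
  have hab : d * x * a < u * x * a := by nlinarith
  obtain ⟨ξ, hξ, hslope⟩ := exists_hasDerivAt_eq_slope g (deriv g) hab
    (hgd.continuous.continuousOn) (fun y _ => (hgd y).hasDerivAt)
  have hud : (0:ℝ) < u - d := by linarith
  have key : (g (u * x * a) - g (d * x * a)) / ((u - d) * x) = deriv g ξ * a := by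
    rw [hslope]
    have h : u * x * a - d * x * a = (u - d) * x * a := by ring
    rw [h]
    field_simp
  rw [key, show deriv g ξ * a - deriv g (x * a) * a = (deriv g ξ - deriv g (x * a)) * a from by
    ring, abs_mul, abs_of_pos ha]
  have hB : |ξ - x * a| ≤ max |u - 1| |1 - d| * x * a := by
    obtain ⟨h1, h2⟩ := hξ
    have hm1 : u - 1 ≤ max |u - 1| |1 - d| := le_trans (le_abs_self _) (le_max_left _ _)
    have hm2 : 1 - d ≤ max |u - 1| |1 - d| := le_trans (le_abs_self _) (le_max_right _ _)
    rw [abs_le]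
    constructor <;> nlinarith
  calc |deriv g ξ - deriv g (x * a)| * a ≤ (M * |ξ - x * a|) * a :=
        mul_le_mul_of_nonneg_right (hLip _ _) ha.le
    _ ≤ (M * (max |u - 1| |1 - d| * x * a)) * a :=
        mul_le_mul_of_nonneg_right (mul_le_mul_of_nonneg_left hB hM0) ha.le
    _ = M * (max |u - 1| |1 - d| * x) * a ^ 2 := by ring

theorem stmt16 (u d R : ℝ) (hd : 0 < d) (hdR : d < R) (hRu : R < u)
    (q : ℝ) (hq : q = (R - d) / (u - d)) (N k : ℕ) (hk : k < N)
    (g : ℝ → ℝ) (hg : ContDiff ℝ 2 g) (M : ℝ)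
    (hM : ∀ s, |iteratedDeriv 2 g s| ≤ M)
    (f : ℕ → ℝ → ℝ)
    (hf : ∀ (k' : ℕ) (x : ℝ), f k' x = R ^ ((k' : ℤ) - (N : ℤ)) *
      ∑ i ∈ range (N - k' + 1),
        ((N - k').choose i : ℝ) * q ^ i * (1 - q) ^ (N - k' - i)
          * g (x * u ^ i * d ^ (N - k' - i)))
    (x : ℝ) (hx : 0 < x) :
    |(f (k+1) (u * x) - f (k+1) (d * x)) / ((u - d) * x)
        - deriv (f (k+1)) x|
      ≤ M * (max |u - 1| |1 - d| * x)
          * (q * u ^ 2 / R + (1 - q) * d ^ 2 / R) ^ (N - k - 1) := by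
  have hR0 : 0 < R := hd.trans hdR
  have hud : (0:ℝ) < u - d := by linarith
  have hq0 : 0 ≤ q := by rw [hq]; exact div_nonneg (by linarith) (by linarith)
  have hq1 : q ≤ 1 := by rw [hq, div_le_one hud]; linarith
  have hM0 : 0 ≤ M := le_trans (abs_nonneg _) (hM 0)
  have hgd : Differentiable ℝ g := hg.differentiable (by norm_num)
  have hg'd : Differentiable ℝ (deriv g) := by
    have h2 : ContDiff ℝ ((1 : WithTop ℕ∞) + 1) g := by exact_mod_cast hg
    exact ((contDiff_succ_iff_deriv.mp h2).2.2).differentiable (by norm_num)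
  have hit2 : iteratedDeriv 2 g = deriv (deriv g) := by
    rw [show (2:ℕ) = 1 + 1 from rfl, iteratedDeriv_succ, iteratedDeriv_one]
  have hLip : ∀ s t : ℝ, |deriv g s - deriv g t| ≤ M * |s - t| := by
    intro s t
    have := Convex.norm_image_sub_le_of_norm_deriv_le (f := deriv g) (s := Set.univ)
      (fun y _ => hg'd y)
      (fun y _ => by
        have := hM y
        rw [hit2] at this
        simpa [Real.norm_eq_abs] using this)
      convex_univ (Set.mem_univ t) (Set.mem_univ s)
    simpa [Real.norm_eq_abs] using this
  set m := N - (k + 1) with hmdef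
  have hm' : N - k - 1 = m := by omega
  -- derivative of f (k+1)
  have hder : HasDerivAt (f (k + 1))
      (R ^ (((k:ℤ)+1) - (N : ℤ)) * ∑ i ∈ range (m + 1),
        (m.choose i : ℝ) * q ^ i * (1 - q) ^ (m - i) *
          (deriv g (x * u ^ i * d ^ (m - i)) * (u ^ i * d ^ (m - i)))) x := by
    have hfe : f (k + 1) = fun y => R ^ (((k:ℤ)+1) - (N : ℤ)) *
        ∑ i ∈ range (m + 1),
          (m.choose i : ℝ) * q ^ i * (1 - q) ^ (m - i) * g (y * u ^ i * d ^ (m - i)) := by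
      funext y
      rw [hf (k+1) y]
      norm_num [hmdef]
    rw [hfe]
    apply HasDerivAt.const_mul
    apply HasDerivAt.fun_sum
    intro i _
    have hinner : HasDerivAt (fun y : ℝ => y * u ^ i * d ^ (m - i)) (u ^ i * d ^ (m - i)) x := by
      simpa using ((hasDerivAt_id x).mul_const (u ^ i)).mul_const (d ^ (m - i))
    have hgu : HasDerivAt g (deriv g (x * u ^ i * d ^ (m - i))) (x * u ^ i * d ^ (m - i)) :=
      (hgd _).hasDerivAt
    have := (hgu.comp x hinner).const_mul ((m.choose i : ℝ) * q ^ i * (1 - q) ^ (m - i))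
    simpa [Function.comp] using this
  -- rewrite the LHS as a single sum
  have hDne : (u - d) * x ≠ 0 := by positivity
  have hmain : (f (k+1) (u * x) - f (k+1) (d * x)) / ((u - d) * x) - deriv (f (k+1)) x
      = R ^ (((k:ℤ)+1) - (N : ℤ)) * ∑ i ∈ range (m + 1),
          (m.choose i : ℝ) * q ^ i * (1 - q) ^ (m - i) *
            ((g (u * x * u ^ i * d ^ (m - i)) - g (d * x * u ^ i * d ^ (m - i)))
              / ((u - d) * x) - deriv g (x * u ^ i * d ^ (m - i)) * (u ^ i * d ^ (m - i))) := by
    rw [hf (k+1) (u*x), hf (k+1) (d*x), hder.deriv]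
    rw [show (((k+1:ℕ):ℤ) - (N:ℤ)) = ((k:ℤ)+1) - (N:ℤ) from by push_cast; ring]
    rw [← hmdef]
    simp only [Finset.mul_sum, Finset.sum_div, ← Finset.sum_sub_distrib]
    apply Finset.sum_congr rfl
    intro i _
    field_simp
  rw [hmain, hm']
  -- positivity of the exponential prefactor
  have hE : (0:ℝ) < R ^ (((k:ℤ)+1) - (N : ℤ)) := zpow_pos hR0 _
  -- per-term bound
  have hterm : ∀ i ∈ range (m + 1),
      |(m.choose i : ℝ) * q ^ i * (1 - q) ^ (m - i) *
        ((g (u * x * u ^ i * d ^ (m - i)) - g (d * x * u ^ i * d ^ (m - i)))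
          / ((u - d) * x) - deriv g (x * u ^ i * d ^ (m - i)) * (u ^ i * d ^ (m - i)))|
      ≤ (m.choose i : ℝ) * q ^ i * (1 - q) ^ (m - i) *
          (M * (max |u - 1| |1 - d| * x) * (u ^ i * d ^ (m - i)) ^ 2) := by
    intro i _
    have hc : (0:ℝ) ≤ (m.choose i : ℝ) * q ^ i * (1 - q) ^ (m - i) :=
      mul_nonneg (mul_nonneg (Nat.cast_nonneg _) (pow_nonneg hq0 _))
        (pow_nonneg (by linarith) _)
    rw [abs_mul, abs_of_nonneg hc]
    apply mul_le_mul_of_nonneg_left _ hc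
    have ha : (0:ℝ) < u ^ i * d ^ (m - i) := mul_pos (pow_pos (by linarith) _) (pow_pos hd _)
    have := stmt16_slope g M hM0 hgd hLip u d x (u ^ i * d ^ (m - i)) hx ha hd (by linarith)
    have e1 : u * x * (u ^ i * d ^ (m - i)) = u * x * u ^ i * d ^ (m - i) := by ring
    have e2 : d * x * (u ^ i * d ^ (m - i)) = d * x * u ^ i * d ^ (m - i) := by ring
    have e3 : x * (u ^ i * d ^ (m - i)) = x * u ^ i * d ^ (m - i) := by ring
    rwa [e1, e2, e3] at this
  -- sum the bounds
  have hsum := Finset.abs_sum_le_sum_abs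
    (fun i => (m.choose i : ℝ) * q ^ i * (1 - q) ^ (m - i) *
      ((g (u * x * u ^ i * d ^ (m - i)) - g (d * x * u ^ i * d ^ (m - i)))
        / ((u - d) * x) - deriv g (x * u ^ i * d ^ (m - i)) * (u ^ i * d ^ (m - i))))
    (range (m + 1))
  have hsum2 := le_trans hsum (Finset.sum_le_sum hterm)
  rw [abs_mul, abs_of_pos hE]
  calc R ^ (((k:ℤ)+1) - (N : ℤ)) * |∑ i ∈ range (m + 1), _|
      ≤ R ^ (((k:ℤ)+1) - (N : ℤ)) * ∑ i ∈ range (m + 1),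
          (m.choose i : ℝ) * q ^ i * (1 - q) ^ (m - i) *
            (M * (max |u - 1| |1 - d| * x) * (u ^ i * d ^ (m - i)) ^ 2) :=
        mul_le_mul_of_nonneg_left hsum2 hE.le
    _ = M * (max |u - 1| |1 - d| * x)
          * (q * u ^ 2 / R + (1 - q) * d ^ 2 / R) ^ m := by
        have hbin : ∑ i ∈ range (m + 1),
            (m.choose i : ℝ) * q ^ i * (1 - q) ^ (m - i) *
              (M * (max |u - 1| |1 - d| * x) * (u ^ i * d ^ (m - i)) ^ 2)
            = M * (max |u - 1| |1 - d| * x) * (q * u ^ 2 + (1 - q) * d ^ 2) ^ m := by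
          rw [add_pow, Finset.mul_sum]
          apply Finset.sum_congr rfl
          intro i _
          rw [mul_pow q (u ^ 2), mul_pow (1 - q) (d ^ 2), mul_pow (u ^ i) (d ^ (m - i)),
            ← pow_mul, ← pow_mul, ← pow_mul, ← pow_mul]
          ring
        rw [hbin]
        have hze : (((k:ℤ)+1) - (N : ℤ)) = -(m : ℤ) := by
          rw [hmdef]; omega
        rw [hze, zpow_neg, zpow_natCast, ← add_div, div_pow]
        have hRm : (R:ℝ) ^ m ≠ 0 := by positivity
        field_simp
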